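/- Let V₁, V₂, V₃ ∈ ℝ² be affinely independent with W in the interior of triangle (V₁,V₂,V₃). Then (V₁,V₂,V₃) is positively oriented if and only if det(V₂ - V₁, V₃ - W) > 0. -/
import Mathlib

def det2 (u v : ℝ × ℝ) : ℝ := u.1 * v.2 - u.2 * v.1

def ori (A B C : ℝ × ℝ) : ℝ := det2 (B - A) (C - B)

theorem stmt3 (V₁ V₂ V₃ W : ℝ × ℝ)
    (hindep : AffineIndependent ℝ ![V₁, V₂, V₃])
    (hW : ∃ l₁ l₂ l₃ : ℝ, l₁ ∈ Set.Ioo (0:ℝ) 1 ∧ l₂ ∈ Set.Ioo (0:ℝ) 1 ∧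
      l₃ ∈ Set.Ioo (0:ℝ) 1 ∧ l₁ + l₂ + l₃ = 1 ∧ W = l₁ • V₁ + l₂ • V₂ + l₃ • V₃) :
    0 < ori V₁ V₂ V₃ ↔ 0 < det2 (V₂ - V₁) (V₃ - W) := by
  obtain ⟨l₁, l₂, l₃, h1, h2, h3, hsum, hWeq⟩ := hW
  subst hWeq
  have hl3 : l₃ = 1 - l₁ - l₂ := by linarith
  subst hl3
  have key : det2 (V₂ - V₁) (V₃ - (l₁ • V₁ + l₂ • V₂ + (1 - l₁ - l₂) • V₃))
      = (l₁ + l₂) * ori V₁ V₂ V₃ := by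
    simp [ori, det2, Prod.smul_def, Prod.sub_def, Prod.add_def, smul_eq_mul]
    ring
  rw [key]
  have hpos : 0 < l₁ + l₂ := by
    have := h1.1; have := h2.1; linarith
  constructor <;> intro h
  · positivity
  · nlinarith
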